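/- Let N ≥ 2 and let M = (M_1,…,M_N) with each M_i : [0,1]^N → [0,1] twice continuously differentiable (on an open set containing [0,1]^N). Suppose that for every family Q = (Q_1,…,Q_N) of quality functions Q_k : [0,1]^N → [0,1] that are twice continuously differentiable, have all first partial derivatives nonnegative on [0,1]^N, and satisfy ∂²Q_k/(∂x_k ∂x_j)(x) ≥ 0 for all j ≠ k and all x ∈ [0,1]^N, the composite functions satisfy strategic complementarities, i.e. ∂²( M_i ∘ Q )/(∂x_i ∂x_j)(x) ≥ 0 for every i, every j ≠ i, and every x ∈ [0,1]^N, where Q(x) = (Q_1(x),…,Q_N(x)). Then M is monotone in qualities: ∂M_i/∂Q_k (the partial derivative of M_i with respect to its k-th argument) is nonnegative at every point of [0,1]^N, for all i and k. -/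

import Mathlib

set_option maxHeartbeats 1000000


/-- if a twice continuously differentiable mechanism `M` guarantees
strategic complementarities for every quality family satisfying positive spillovers
and effort complementarities, then each `M i` is monotone (nonnegative partial
derivatives) in every quality argument on `[0,1]^N`. -/
theorem strategic_complementarities_implies_monotone_mechanism
    (N : ℕ) (hN : 2 ≤ N)
    (M : Fin N → (Fin N → ℝ) → ℝ)
    (V : Set (Fin N → ℝ)) (hV : IsOpen V) (hVI : Set.Icc (0 : Fin N → ℝ) 1 ⊆ V)
    (hM2 : ∀ i, ContDiffOn ℝ 2 (M i) V)
    (hMrange : ∀ i, ∀ q ∈ Set.Icc (0 : Fin N → ℝ) 1, M i q ∈ Set.Icc (0 : ℝ) 1)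
    (hSC : ∀ Q : Fin N → (Fin N → ℝ) → ℝ,
      (∀ k, ContDiff ℝ 2 (Q k)) →
      (∀ k, ∀ x ∈ Set.Icc (0 : Fin N → ℝ) 1, Q k x ∈ Set.Icc (0 : ℝ) 1) →
      (∀ k j, ∀ x ∈ Set.Icc (0 : Fin N → ℝ) 1,
        0 ≤ fderiv ℝ (Q k) x (Pi.single j 1)) →
      (∀ k j, j ≠ k → ∀ x ∈ Set.Icc (0 : Fin N → ℝ) 1,
        0 ≤ fderiv ℝ (fun y => fderiv ℝ (Q k) y (Pi.single j 1)) x (Pi.single k 1)) →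
      ∀ i j, j ≠ i → ∀ x ∈ Set.Icc (0 : Fin N → ℝ) 1,
        0 ≤ fderiv ℝ (fun y => fderiv ℝ (fun z => M i (fun k => Q k z)) y
              (Pi.single j 1)) x (Pi.single i 1)) :
    ∀ i k, ∀ q ∈ Set.Icc (0 : Fin N → ℝ) 1, 0 ≤ fderiv ℝ (M i) q (Pi.single k 1) := by
  intro i k q hq
  obtain ⟨j, hji⟩ : ∃ j : Fin N, j ≠ i := by
    have hcard : 1 < Fintype.card (Fin N) := by rw [Fintype.card_fin]; omega
    exact Fintype.exists_ne_of_one_lt_card hcard i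
  have hij : i ≠ j := hji.symm
  set Li : (Fin N → ℝ) →L[ℝ] ℝ := ContinuousLinearMap.proj i with hLi
  set Lj : (Fin N → ℝ) →L[ℝ] ℝ := ContinuousLinearMap.proj j with hLj
  have h0Icc : (0 : Fin N → ℝ) ∈ Set.Icc (0 : Fin N → ℝ) 1 :=
    Set.mem_Icc.mpr ⟨le_rfl, Pi.le_def.mpr fun _ => zero_le_one⟩
  have hsingle_nonneg : ∀ (a b : Fin N), (0:ℝ) ≤ (Pi.single a 1 : Fin N → ℝ) b := by
    intro a b
    rcases eq_or_ne b a with h | h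
    · subst h; simp
    · simp [Pi.single_eq_of_ne h]
  -- KEY STEP: the inequality at interior-in-the-k-th-coordinate points
  have key : ∀ q' ∈ Set.Icc (0 : Fin N → ℝ) 1, q' k < 1 →
      0 ≤ fderiv ℝ (M i) q' (Pi.single k 1) := by
    intro q' hq' hqk1
    set ε : ℝ := 1 - q' k with hεdef
    have hεpos : 0 < ε := by rw [hεdef]; linarith
    set Q : Fin N → (Fin N → ℝ) → ℝ :=
      fun m x => q' m + (ε * (x i * x j)) * (Pi.single k 1 : Fin N → ℝ) m with hQdef
    set T : (Fin N → ℝ) → (Fin N → ℝ) := fun x => fun m => Q m x with hTdef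
    have hB : ∀ x : Fin N → ℝ, HasFDerivAt (fun y : Fin N → ℝ => ε * (y i * y j))
        (ε • ((x i) • Lj + (x j) • Li)) x := fun x =>
      (Li.hasFDerivAt.mul Lj.hasFDerivAt).const_mul ε
    have hQkfun : Q k = fun y : Fin N → ℝ => q' k + ε * (y i * y j) := by
      funext y; simp [hQdef]
    have hQk : ∀ x, HasFDerivAt (Q k) (ε • ((x i) • Lj + (x j) • Li)) x := by
      intro x
      rw [hQkfun]
      exact (hB x).const_add (q' k)
    have hQm : ∀ m, m ≠ k → Q m = fun _ => q' m := by
      intro m hm; funext y; simp [hQdef, Pi.single_eq_of_ne hm]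
    -- hypothesis 1 : smoothness
    have hQcd : ∀ m, ContDiff ℝ 2 (Q m) := by
      intro m
      exact contDiff_const.add
        (((contDiff_const.mul ((Li.contDiff).mul (Lj.contDiff)))).mul contDiff_const)
    -- hypothesis 2 : range
    have hQrange : ∀ m, ∀ x ∈ Set.Icc (0 : Fin N → ℝ) 1, Q m x ∈ Set.Icc (0:ℝ) 1 := by
      intro m x hx
      rcases eq_or_ne m k with hm | hm
      · rw [hm]
        have hxi0 : 0 ≤ x i := hx.1 i
        have hxj0 : 0 ≤ x j := hx.1 j
        have hxi1 : x i ≤ 1 := hx.2 i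
        have hxj1 : x j ≤ 1 := hx.2 j
        have hk0 : 0 ≤ q' k := hq'.1 k
        have hprod0 : 0 ≤ x i * x j := mul_nonneg hxi0 hxj0
        have hprod1 : x i * x j ≤ 1 := by nlinarith [mul_nonneg (sub_nonneg.mpr hxi1) hxj0]
        have hp0 : 0 ≤ ε * (x i * x j) := mul_nonneg hεpos.le hprod0
        have hp1 : ε * (x i * x j) ≤ ε * 1 := mul_le_mul_of_nonneg_left hprod1 hεpos.le
        constructor
        · simp only [hQdef, Pi.single_eq_same, mul_one]
          linarith
        · simp only [hQdef, Pi.single_eq_same, mul_one]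
          linarith
      · rw [hQm m hm]
        exact ⟨hq'.1 m, hq'.2 m⟩
    -- hypothesis 3 : nonnegative first partials
    have hQpos : ∀ m j', ∀ x ∈ Set.Icc (0 : Fin N → ℝ) 1,
        0 ≤ fderiv ℝ (Q m) x (Pi.single j' 1) := by
      intro m j' x hx
      rcases eq_or_ne m k with hm | hm
      · rw [hm]
        rw [(hQk x).fderiv]
        simp only [ContinuousLinearMap.smul_apply, ContinuousLinearMap.add_apply,
          hLi, hLj, ContinuousLinearMap.proj_apply, smul_eq_mul]
        have hε0 : 0 ≤ ε := le_of_lt hεpos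
        have h1 : 0 ≤ x i * (Pi.single j' 1 : Fin N → ℝ) j :=
          mul_nonneg (hx.1 i) (hsingle_nonneg j' j)
        have h2 : 0 ≤ x j * (Pi.single j' 1 : Fin N → ℝ) i :=
          mul_nonneg (hx.1 j) (hsingle_nonneg j' i)
        exact mul_nonneg hε0 (add_nonneg h1 h2)
      · rw [hQm m hm]
        simp
    -- hypothesis 4 : cross partials of quality
    have hQcross : ∀ m j', j' ≠ m → ∀ x ∈ Set.Icc (0 : Fin N → ℝ) 1,
        0 ≤ fderiv ℝ (fun y => fderiv ℝ (Q m) y (Pi.single j' 1)) x (Pi.single m 1) := by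
      intro m j' _ x _
      rcases eq_or_ne m k with hm | hm
      · rw [hm]
        have hrw : (fun y => fderiv ℝ (Q k) y (Pi.single j' 1))
            = fun y : Fin N → ℝ =>
              ε * (y i * (Pi.single j' 1 : Fin N → ℝ) j + y j * (Pi.single j' 1 : Fin N → ℝ) i) := by
          funext y
          rw [(hQk y).fderiv]
          simp [hLi, hLj, smul_eq_mul]
          ring
        rw [hrw]
        have hlin : HasFDerivAt
            (fun y : Fin N → ℝ =>
              ε * (y i * (Pi.single j' 1 : Fin N → ℝ) j + y j * (Pi.single j' 1 : Fin N → ℝ) i))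
            (ε • (((Pi.single j' 1 : Fin N → ℝ) j) • Li + ((Pi.single j' 1 : Fin N → ℝ) i) • Lj)) x :=
          ((Li.hasFDerivAt.mul_const ((Pi.single j' 1 : Fin N → ℝ) j)).add
            (Lj.hasFDerivAt.mul_const ((Pi.single j' 1 : Fin N → ℝ) i))).const_mul ε
        rw [hlin.fderiv]
        simp only [ContinuousLinearMap.smul_apply, ContinuousLinearMap.add_apply,
          hLi, hLj, ContinuousLinearMap.proj_apply, smul_eq_mul]
        have hε0 : 0 ≤ ε := le_of_lt hεpos
        have h1 : 0 ≤ (Pi.single j' 1 : Fin N → ℝ) j * (Pi.single k 1 : Fin N → ℝ) i :=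
          mul_nonneg (hsingle_nonneg j' j) (hsingle_nonneg k i)
        have h2 : 0 ≤ (Pi.single j' 1 : Fin N → ℝ) i * (Pi.single k 1 : Fin N → ℝ) j :=
          mul_nonneg (hsingle_nonneg j' i) (hsingle_nonneg k j)
        exact mul_nonneg hε0 (add_nonneg h1 h2)
      · rw [hQm m hm]
        simp
    -- the inner map and its derivative
    have hTval : T = fun x : Fin N → ℝ => q' + (ε * (x i * x j)) • (Pi.single k 1 : Fin N → ℝ) := by
      funext x m
      simp [hTdef, hQdef, smul_eq_mul]
    have hT : ∀ x, HasFDerivAt T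
        ((ε • ((x i) • Lj + (x j) • Li)).smulRight ((Pi.single k 1 : Fin N → ℝ))) x := by
      intro x
      rw [hTval]
      exact ((hB x).smul_const ((Pi.single k 1 : Fin N → ℝ))).const_add q'
    have hTcont : Continuous T :=
      continuous_iff_continuousAt.mpr fun x => (hT x).continuousAt
    have hTmem : ∀ x ∈ Set.Icc (0 : Fin N → ℝ) 1, T x ∈ Set.Icc (0 : Fin N → ℝ) 1 := by
      intro x hx
      refine Set.mem_Icc.mpr ⟨Pi.le_def.mpr fun m => ?_, Pi.le_def.mpr fun m => ?_⟩
      · exact (hQrange m x hx).1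
      · exact (hQrange m x hx).2
    have hT0 : T 0 = q' := by
      funext m; simp [hTdef, hQdef]
    set U : Set (Fin N → ℝ) := T ⁻¹' V with hUdef
    have hU : IsOpen U := hV.preimage hTcont
    have h0U : (0 : Fin N → ℝ) ∈ U := by
      simp only [hUdef, Set.mem_preimage, hT0]
      exact hVI hq'
    set g : (Fin N → ℝ) → ℝ := fun z => M i (T z) with hgdef
    have hg : ∀ y ∈ U, HasFDerivAt g
        ((fderiv ℝ (M i) (T y)).comp
          ((ε • ((y i) • Lj + (y j) • Li)).smulRight ((Pi.single k 1 : Fin N → ℝ)))) y := by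
      intro y hy
      have hMd : DifferentiableAt ℝ (M i) (T y) :=
        ((hM2 i).contDiffAt (hV.mem_nhds hy)).differentiableAt (by norm_num)
      exact hMd.hasFDerivAt.comp y (hT y)
    set F : (Fin N → ℝ) → ℝ := fun p => fderiv ℝ (M i) p ((Pi.single k 1 : Fin N → ℝ)) with hFdef
    have hgval : ∀ y ∈ U,
        fderiv ℝ g y (Pi.single j 1) = (ε * y i) * F (T y) := by
      intro y hy
      rw [(hg y hy).fderiv]
      have hev : ((ε • ((y i) • Lj + (y j) • Li)).smulRight ((Pi.single k 1 : Fin N → ℝ)))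
          (Pi.single j 1) = (ε * y i) • (Pi.single k 1 : Fin N → ℝ) := by
        simp [hLi, hLj, Pi.single_eq_same, Pi.single_eq_of_ne hij, smul_eq_mul]
      simp only [ContinuousLinearMap.comp_apply, hev, map_smul, smul_eq_mul, hFdef]
    have heq : (fun y => fderiv ℝ g y (Pi.single j 1))
        =ᶠ[nhds (0 : Fin N → ℝ)] (fun y => (ε * y i) * F (T y)) :=
      Filter.eventuallyEq_of_mem (hU.mem_nhds h0U) (fun y hy => hgval y hy)
    -- differentiability of the second factor at 0
    have hFdiff : DifferentiableAt ℝ (fun p => fderiv ℝ (M i) p) (T 0) := by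
      rw [hT0]
      have h1 : ContDiffOn ℝ 1 (fderiv ℝ (M i)) V :=
        (hM2 i).fderiv_of_isOpen hV (by norm_num)
      exact (h1.differentiableOn (by norm_num)).differentiableAt (hV.mem_nhds (hVI hq'))
    have hψ : DifferentiableAt ℝ (fun y => F (T y)) 0 := by
      have hc : DifferentiableAt ℝ (fun y => fderiv ℝ (M i) (T y)) 0 := by
        have := hFdiff.comp (0 : Fin N → ℝ) (hT 0).differentiableAt
        exact this
      exact hc.clm_apply (differentiableAt_const _)
    have hφ : HasFDerivAt (fun y : Fin N → ℝ => ε * y i) (ε • Li) 0 :=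
      Li.hasFDerivAt.const_mul ε
    have hprod : HasFDerivAt (fun y => (ε * y i) * F (T y))
        ((ε * (0 : Fin N → ℝ) i) • (fderiv ℝ (fun y => F (T y)) 0)
          + (F (T 0)) • (ε • Li)) 0 :=
      hφ.mul hψ.hasFDerivAt
    -- evaluate the cross derivative of the composite at 0
    have hval : fderiv ℝ (fun y => fderiv ℝ (fun z => M i (fun m => Q m z)) y
        (Pi.single j 1)) 0 (Pi.single i 1) = ε * F q' := by
      have hgQ : (fun z => M i (fun m => Q m z)) = g := rfl
      rw [hgQ, heq.fderiv_eq, hprod.fderiv]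
      simp [hLi, hT0, Pi.single_eq_same, smul_eq_mul]
      ring
    have hsc := hSC Q hQcd hQrange hQpos hQcross i j hji 0 h0Icc
    rw [hval] at hsc
    exact (mul_nonneg_iff_of_pos_left hεpos).mp hsc
  -- LIMIT STEP: extend to points with q k = 1 by continuity
  set S : (Fin N → ℝ) → ℝ := fun p => fderiv ℝ (M i) p (Pi.single k 1) with hSdef
  have hScont : ContinuousAt S q := by
    have h1 : ContinuousOn (fderiv ℝ (M i)) V :=
      (hM2 i).continuousOn_fderiv_of_isOpen hV (by norm_num)
    exact (h1.clm_apply continuousOn_const).continuousAt (hV.mem_nhds (hVI hq))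
  set p : ℕ → (Fin N → ℝ) :=
    fun n => Function.update q k ((1 - 1/(n+1 : ℝ)) * q k) with hpdef
  have hfrac : ∀ n : ℕ, 0 < 1/(n+1:ℝ) ∧ 1/(n+1:ℝ) ≤ 1 := by
    intro n
    constructor
    · positivity
    · rw [div_le_one (by positivity)]
      have : (0:ℝ) ≤ (n:ℝ) := Nat.cast_nonneg n
      linarith
  have hmem : ∀ n, p n ∈ Set.Icc (0 : Fin N → ℝ) 1 := by
    intro n
    obtain ⟨hn1, hn2⟩ := hfrac n
    refine Set.mem_Icc.mpr ⟨Pi.le_def.mpr fun m => ?_, Pi.le_def.mpr fun m => ?_⟩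
    · rcases eq_or_ne m k with hm | hm
      · rw [hm]
        simp only [hpdef, Function.update_self, Pi.zero_apply]
        exact mul_nonneg (by linarith) (hq.1 k)
      · simp only [hpdef, Function.update_of_ne hm, Pi.zero_apply]
        exact hq.1 m
    · rcases eq_or_ne m k with hm | hm
      · rw [hm]
        simp only [hpdef, Function.update_self, Pi.one_apply]
        have h1 := hq.1 k
        have h2 := hq.2 k
        have h3 : (1 - 1/(n+1:ℝ)) * q k ≤ (1 - 1/(n+1:ℝ)) * 1 :=
          mul_le_mul_of_nonneg_left h2 (by linarith)
        linarith
      · simp only [hpdef, Function.update_of_ne hm, Pi.one_apply]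
        exact hq.2 m
  have hlt : ∀ n, (p n) k < 1 := by
    intro n
    obtain ⟨hn1, hn2⟩ := hfrac n
    simp only [hpdef, Function.update_self]
    have h1 := hq.1 k
    have h2 := hq.2 k
    have h3 : (1 - 1/(n+1:ℝ)) * q k ≤ (1 - 1/(n+1:ℝ)) * 1 :=
      mul_le_mul_of_nonneg_left h2 (by linarith)
    linarith
  have hptend : Filter.Tendsto p Filter.atTop (nhds q) := by
    rw [tendsto_pi_nhds]
    intro m
    rcases eq_or_ne m k with hm | hm
    · rw [hm]
      simp only [hpdef, Function.update_self]
      have : Filter.Tendsto (fun n : ℕ => (1 - 1/(n+1:ℝ)) * q k)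
          Filter.atTop (nhds ((1 - 0) * q k)) :=
        ((tendsto_const_nhds.sub tendsto_one_div_add_atTop_nhds_zero_nat).mul
          tendsto_const_nhds)
      simpa using this
    · simp only [hpdef, Function.update_of_ne hm]
      exact tendsto_const_nhds
  have hStend : Filter.Tendsto (fun n => S (p n)) Filter.atTop (nhds (S q)) :=
    hScont.tendsto.comp hptend
  exact ge_of_tendsto hStend
    (Filter.Eventually.of_forall fun n => key (p n) (hmem n) (hlt n))
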